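/- Derivative identity for the second q-Hankel transform: fix an integer m ≥ 1 and set μ = 1 + q^{2−m}. Let ν ≥ 1/2, let α, γ > 0, let p be a real polynomial, and define f(t) = p(t²)·e_{q²}(−αq²t²/μ) for t > 0. Then for every real r > 0, 𝓗^{q,γ}_{ν−1}[t ↦ t ∂^q_t f(t)](r) = ((1+q)/μ) r² · 𝓗^{q,γ}_ν[f](r) − ([2ν]_q/q^{2ν}) · 𝓗^{q,γ}_{ν−1}[f](q^{−1}r). -/

import Mathlib

open scoped BigOperators

noncomputable section

/-- The q-number `[u]_q = (q^u - 1)/(q - 1)`. -/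
def qNum (q u : ℝ) : ℝ := (q ^ u - 1) / (q - 1)

/-- The q-factorial `[n]_q! = ∏_{i=1}^n [i]_q`. -/
def qFact (q : ℝ) (n : ℕ) : ℝ := ∏ i ∈ Finset.range n, qNum q ((i : ℝ) + 1)

/-- The q-Gamma function `Γ_q(t) = (1-q)^{1-t} ∏_{k=0}^∞ (1-q^{k+1})/(1-q^{k+t})`. -/
def qGamma (q t : ℝ) : ℝ :=
  (1 - q) ^ (1 - t) * ∏' k : ℕ, (1 - q ^ (k + 1)) / (1 - q ^ ((k : ℝ) + t))

/-- The q-derivative `∂^q_t f(t) = (f(qt) - f(t))/((q-1)t)`.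
The `q⁻¹`-derivative is `qDeriv q⁻¹`. -/
def qDeriv (q : ℝ) (f : ℝ → ℝ) (t : ℝ) : ℝ := (f (q * t) - f t) / ((q - 1) * t)

/-- The q-Pochhammer symbol `(a; q)_k = ∏_{l=0}^{k-1} (1 - a q^l)`. -/
def qPoch (a q : ℝ) (k : ℕ) : ℝ := ∏ l ∈ Finset.range k, (1 - a * q ^ l)

/-- The q-exponential `E_q(t) = ∑_{j=0}^∞ q^{j(j-1)/2} t^j/[j]_q!`. -/
def qExpE (q t : ℝ) : ℝ := ∑' j : ℕ, q ^ (j * (j - 1) / 2) * t ^ j / qFact q j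

/-- `e_q(-u) := 1/E_q(u)` (intended for `u ≥ 0`); `qExpe q u` denotes `e_q(-u)`. -/
def qExpe (q u : ℝ) : ℝ := (qExpE q u)⁻¹

/-- The first q-Bessel function `J^{(1)}_ν(x|q²)`. -/
def qBessel1 (q ν x : ℝ) : ℝ :=
  (x / (1 + q)) ^ ν *
    ∑' i : ℕ, (-1 : ℝ) ^ i / (qFact (q ^ 2) i * qGamma (q ^ 2) ((i : ℝ) + ν + 1)) *
      (x / (1 + q)) ^ (2 * i)

/-- The second q-Bessel function `J^{(2)}_ν(x|q²)`. -/
def qBessel2 (q ν x : ℝ) : ℝ :=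
  q ^ (ν ^ 2) * (x / (1 + q)) ^ ν *
    ∑' i : ℕ, q ^ (2 * (i : ℝ) * ((i : ℝ) + ν)) * (-1 : ℝ) ^ i /
        (qFact (q ^ 2) i * qGamma (q ^ 2) ((i : ℝ) + ν + 1)) *
      (x / (1 + q)) ^ (2 * i)

/-- The q-Laguerre polynomial `𝓛^{(α)}_j(u|q²)`. -/
def qLaguerre (q α : ℝ) (j : ℕ) (u : ℝ) : ℝ :=
  ∑ i ∈ Finset.range (j + 1),
    q ^ ((j - i) * (j - i + 1)) * (-u) ^ i / (qFact (q ^ 2) (j - i) * qFact (q ^ 2) i) *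
      (qPoch (q ^ (2 * (i : ℝ) + 2 * α + 2)) (q ^ 2) (j - i) / (1 - q ^ 2) ^ (j - i))

/-- The q-Laguerre polynomial `𝓛^{(α)}_j(u|q^{-2})`. -/
def qLaguerreInv (q α : ℝ) (j : ℕ) (u : ℝ) : ℝ :=
  q ^ (-(j : ℝ) * ((j : ℝ) + 1 + 2 * α)) *
    ∑ i ∈ Finset.range (j + 1),
      q ^ (2 * (i : ℝ) * ((i : ℝ) + α)) * (-u) ^ i / (qFact (q ^ 2) (j - i) * qFact (q ^ 2) i) *
        (qPoch (q ^ (2 * (i : ℝ) + 2 * α + 2)) (q ^ 2) (j - i) / (1 - q ^ 2) ^ (j - i))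

/-- The finite Jackson q-integral `∫_0^a f(t) d_q t = (1-q) a ∑_{k=0}^∞ f(q^k a) q^k`. -/
def jackson (q a : ℝ) (f : ℝ → ℝ) : ℝ := (1 - q) * a * ∑' k : ℕ, f (q ^ k * a) * q ^ k

/-- The infinite Jackson q-integral `∫_0^{γ·∞} f(t) d_q t = (1-q) γ ∑_{k=-∞}^∞ f(q^k γ) q^k`. -/
def jacksonInf (q γ : ℝ) (f : ℝ → ℝ) : ℝ := (1 - q) * γ * ∑' k : ℤ, f (q ^ k * γ) * q ^ k

/-- The first q-Hankel transform `𝓗̄^{q,β}_ν`. -/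
def hankel1 (q μ ν β : ℝ) (f : ℝ → ℝ) (t : ℝ) : ℝ :=
  (1 + q) / μ * jackson q (Real.sqrt (μ / ((1 - q ^ 2) * β)))
    (fun r => qBessel1 q ν ((1 + q) / μ * (r * t)) / (r * t) ^ ν * r ^ (2 * ν + 1) * f r)

/-- The second q-Hankel transform `𝓗^{q,γ}_ν`. -/
def hankel2 (q μ ν γ : ℝ) (f : ℝ → ℝ) (r : ℝ) : ℝ :=
  (1 + q) / μ * jacksonInf q γ
    (fun t => qBessel2 q ν (q * ((1 + q) / μ) * (r * t)) / (r * t) ^ ν * t ^ (2 * ν + 1) * f t)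

lemma qNum_pos {q u : ℝ} (hq0 : 0 < q) (hq1 : q < 1) (hu : 0 < u) : 0 < qNum q u := by
  have h1 : q ^ u < 1 := Real.rpow_lt_one hq0.le hq1 hu
  have h2 : q - 1 < 0 := by linarith
  exact div_pos_of_neg_of_neg (by linarith) h2

lemma one_le_qNum {q u : ℝ} (hq0 : 0 < q) (hq1 : q < 1) (hu : 1 ≤ u) : 1 ≤ qNum q u := by
  have h1 : q ^ u ≤ q ^ (1:ℝ) := Real.rpow_le_rpow_of_exponent_ge hq0 hq1.le hu
  rw [Real.rpow_one] at h1
  rw [qNum, le_div_iff_of_neg (by linarith : q - 1 < 0)]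
  linarith

lemma qNum_le {q u : ℝ} (hq0 : 0 < q) (hq1 : q < 1) (hu : 0 < u) :
    qNum q u ≤ (1 - q)⁻¹ := by
  have h1 : 0 < q ^ u := Real.rpow_pos_of_pos hq0 u
  rw [qNum, div_le_iff_of_neg (by linarith : q - 1 < 0)]
  have : (0:ℝ) < 1 - q := by linarith
  field_simp
  nlinarith

lemma qFact_pos {q : ℝ} (hq0 : 0 < q) (hq1 : q < 1) (n : ℕ) : 0 < qFact q n :=
  Finset.prod_pos fun i _ => qNum_pos hq0 hq1 (by positivity)

lemma qFact_succ (q : ℝ) (n : ℕ) :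
    qFact q (n + 1) = qFact q n * qNum q ((n : ℝ) + 1) := Finset.prod_range_succ _ _

lemma one_le_qFact {q : ℝ} (hq0 : 0 < q) (hq1 : q < 1) (n : ℕ) : 1 ≤ qFact q n := by
  induction n with
  | zero => simp [qFact]
  | succ n ih =>
    rw [qFact_succ]
    have h := one_le_qNum hq0 hq1 (u := (n:ℝ)+1) (by linarith [Nat.cast_nonneg (α := ℝ) n])
    nlinarith

lemma qFact_le {q : ℝ} (hq0 : 0 < q) (hq1 : q < 1) (n : ℕ) :
    qFact q n ≤ ((1 - q)⁻¹) ^ n := by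
  rw [qFact]
  calc ∏ i ∈ Finset.range n, qNum q ((i:ℝ) + 1)
      ≤ ∏ _i ∈ Finset.range n, (1-q)⁻¹ :=
        Finset.prod_le_prod (fun i _ => (qNum_pos hq0 hq1 (by positivity)).le)
          (fun i _ => qNum_le hq0 hq1 (by positivity))
    _ = ((1-q)⁻¹) ^ n := by rw [Finset.prod_const, Finset.card_range]

/-- Summability of Gaussian-type series `q^(n*n) * b^n`. -/
lemma summable_qnn {q : ℝ} (hq0 : 0 < q) (hq1 : q < 1) {b : ℝ} (hb : 0 < b) :
    Summable (fun n : ℕ => q ^ (n * n) * b ^ n) := by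
  apply summable_of_ratio_test_tendsto_lt_one (l := 0) one_pos
  · filter_upwards with n
    positivity
  · have hratio : ∀ n : ℕ, ‖q ^ ((n+1) * (n+1)) * b ^ (n+1)‖ / ‖q ^ (n*n) * b ^ n‖
        = (q * b) * (q^2) ^ n := by
      intro n
      have h1 : ‖q ^ ((n+1) * (n+1)) * b ^ (n+1)‖ = q ^ ((n+1)*(n+1)) * b ^ (n+1) := by
        rw [Real.norm_eq_abs, abs_of_pos (by positivity)]
      have h2 : ‖q ^ (n*n) * b ^ n‖ = q ^ (n*n) * b ^ n := by
        rw [Real.norm_eq_abs, abs_of_pos (by positivity)]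
      rw [h1, h2]
      have he : (n+1) * (n+1) = n * n + (2 * n + 1) := by ring
      rw [he, pow_add, pow_succ]
      have hqn : q ^ (n*n) ≠ 0 := by positivity
      have hbn : b ^ n ≠ 0 := by positivity
      field_simp
      ring
    simp only [hratio]
    have : Filter.Tendsto (fun n : ℕ => (q^2 : ℝ) ^ n) Filter.atTop (nhds 0) := by
      apply tendsto_pow_atTop_nhds_zero_of_lt_one (by positivity) (by nlinarith)
    have := this.const_mul (q * b)
    simpa using this

/-- with an extra linear factor -/
lemma summable_qnn_mul {q : ℝ} (hq0 : 0 < q) (hq1 : q < 1) {b : ℝ} (hb : 0 < b) :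
    Summable (fun n : ℕ => ((n : ℝ) + 1) * (q ^ (n * n) * b ^ n)) := by
  refine Summable.of_nonneg_of_le (fun n => by positivity) (fun n => ?_)
    ((summable_qnn hq0 hq1 (b := 2 * b) (by positivity)))
  have h1 : ((n:ℝ) + 1) ≤ 2 ^ n := by
    exact_mod_cast Nat.succ_le_of_lt (Nat.lt_two_pow_self (n := n))
  calc ((n : ℝ) + 1) * (q ^ (n * n) * b ^ n) ≤ 2 ^ n * (q ^ (n*n) * b ^ n) := by
        apply mul_le_mul_of_nonneg_right h1 (by positivity)
    _ = q ^ (n*n) * (2*b) ^ n := by rw [mul_pow]; ring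

lemma abs_log_one_sub_le {x : ℝ} (h0 : 0 ≤ x) (h1 : x < 1) :
    |Real.log (1 - x)| ≤ x / (1 - x) := by
  have hx : 0 < 1 - x := by linarith
  have hneg : Real.log (1 - x) ≤ 0 := Real.log_nonpos (by linarith) (by linarith)
  rw [abs_of_nonpos hneg]
  have : -Real.log (1 - x) = Real.log (1 - x)⁻¹ := by rw [Real.log_inv]
  rw [this]
  have h2 := Real.log_le_sub_one_of_pos (inv_pos.mpr hx)
  have h3 : (1 - x)⁻¹ - 1 = x / (1 - x) := by field_simp; ring
  linarith [h2, h3.le, h3.ge]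

lemma qGamma_bound {Q : ℝ} (hQ0 : 0 < Q) (hQ1 : Q < 1) :
    ∃ C : ℝ, 0 < C ∧ ∀ s : ℝ, 1/2 ≤ s →
      0 < qGamma Q s ∧ (qGamma Q s)⁻¹ ≤ C * (1 - Q) ^ (s - 1) := by
  have hQh : Q ^ ((1:ℝ)/2) < 1 := Real.rpow_lt_one hQ0.le hQ1 (by norm_num)
  have hQhpos : 0 < Q ^ ((1:ℝ)/2) := Real.rpow_pos_of_pos hQ0 _
  set c₁ : ℝ := Q/(1-Q) + 1/(1 - Q^((1:ℝ)/2)) with hc₁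
  have hc₁pos : 0 < c₁ := by
    apply add_pos
    · exact div_pos hQ0 (by linarith)
    · exact div_pos one_pos (by linarith)
  set M₀ : ℝ := c₁ * (1-Q)⁻¹ with hM₀
  refine ⟨Real.exp M₀, Real.exp_pos _, fun s hs => ?_⟩
  set g : ℕ → ℝ := fun k => Real.log (1 - Q ^ (k+1)) - Real.log (1 - Q ^ ((k:ℝ) + s)) with hg
  have h1 : ∀ k : ℕ, 0 < 1 - Q ^ (k+1) := fun k => by
    have : Q ^ (k+1) < 1 := pow_lt_one₀ hQ0.le hQ1 (Nat.succ_ne_zero k)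
    linarith
  have h2 : ∀ k : ℕ, 0 < 1 - Q ^ ((k:ℝ) + s) := fun k => by
    have : Q ^ ((k:ℝ) + s) < 1 := by
      apply Real.rpow_lt_one hQ0.le hQ1
      have := Nat.cast_nonneg (α := ℝ) k
      linarith
    linarith
  have hks : ∀ k : ℕ, Q ^ ((k:ℝ) + s) ≤ Q ^ k * Q ^ ((1:ℝ)/2) := fun k => by
    rw [Real.rpow_add hQ0, Real.rpow_natCast]
    have : Q ^ s ≤ Q ^ ((1:ℝ)/2) := Real.rpow_le_rpow_of_exponent_ge hQ0 hQ1.le hs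
    exact mul_le_mul_of_nonneg_left this (by positivity)
  have hgb : ∀ k : ℕ, ‖g k‖ ≤ c₁ * Q ^ k := by
    intro k
    rw [Real.norm_eq_abs]
    have hb1 : |Real.log (1 - Q ^ (k+1))| ≤ Q ^ k * (Q/(1-Q)) := by
      have := abs_log_one_sub_le (x := Q ^ (k+1)) (by positivity) (by linarith [h1 k])
      refine this.trans ?_
      rw [pow_succ]
      have hden : (1:ℝ) - Q ≤ 1 - Q ^ k * Q := by
        have : Q ^ k * Q ≤ Q := by
          have : Q ^ k ≤ 1 := pow_le_one₀ hQ0.le hQ1.le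
          nlinarith
        linarith
      have h0 : (0:ℝ) < 1 - Q := by linarith
      rw [div_le_iff₀ (by nlinarith [h1 k, pow_succ Q k] : (0:ℝ) < 1 - Q^k*Q)]
      have hXd : Q/(1-Q)*(1-Q) = Q := by field_simp
      have hmul := mul_le_mul_of_nonneg_left hden (div_pos hQ0 h0).le
      nlinarith [pow_nonneg hQ0.le k, hmul]
    have hb2 : |Real.log (1 - Q ^ ((k:ℝ)+s))| ≤ Q ^ k * (1/(1 - Q^((1:ℝ)/2))) := by
      have hlt : Q ^ ((k:ℝ)+s) < 1 := by linarith [h2 k]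
      have := abs_log_one_sub_le (x := Q ^ ((k:ℝ)+s)) (by positivity) hlt
      refine this.trans ?_
      have hle : Q ^ ((k:ℝ)+s) ≤ Q ^ ((1:ℝ)/2) := by
        apply Real.rpow_le_rpow_of_exponent_ge hQ0 hQ1.le
        have := Nat.cast_nonneg (α := ℝ) k
        linarith
      have hden : 1 - Q^((1:ℝ)/2) ≤ 1 - Q ^ ((k:ℝ)+s) := by linarith
      have hnum : Q ^ ((k:ℝ)+s) ≤ Q ^ k * Q ^ ((1:ℝ)/2) := hks k
      have hd0 : (0:ℝ) < 1 - Q^((1:ℝ)/2) := by linarith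
      rw [div_le_iff₀ (h2 k)]
      have hQh1 : Q ^ ((1:ℝ)/2) ≤ 1 := hQh.le
      have hq2 : Q ^ k * (1/(1 - Q^((1:ℝ)/2))) * (1 - Q ^ ((k:ℝ)+s)) ≥
          Q ^ k * (1/(1 - Q^((1:ℝ)/2))) * (1 - Q^((1:ℝ)/2)) := by
        apply mul_le_mul_of_nonneg_left hden (by positivity)
      have : Q ^ k * (1/(1 - Q^((1:ℝ)/2))) * (1 - Q^((1:ℝ)/2)) = Q ^ k := by field_simp
      calc Q ^ ((k:ℝ)+s) ≤ Q ^ k * Q ^ ((1:ℝ)/2) := hnum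
        _ ≤ Q ^ k := by nlinarith [pow_nonneg hQ0.le k]
        _ = Q ^ k * (1/(1 - Q^((1:ℝ)/2))) * (1 - Q^((1:ℝ)/2)) := this.symm
        _ ≤ _ := hq2
    calc ‖g k‖ ≤ |Real.log (1 - Q ^ (k+1))| + |Real.log (1 - Q ^ ((k:ℝ)+s))| := abs_sub _ _
      _ ≤ Q ^ k * (Q/(1-Q)) + Q ^ k * (1/(1 - Q^((1:ℝ)/2))) := add_le_add hb1 hb2
      _ = c₁ * Q ^ k := by rw [hc₁]; ring
  have hgeo : Summable (fun k : ℕ => c₁ * Q ^ k) :=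
    (summable_geometric_of_lt_one hQ0.le hQ1).mul_left c₁
  have hsg : Summable g := Summable.of_norm_bounded hgeo hgb
  have hT := hsg.hasSum
  set T : ℝ := ∑' k, g k with hTdef
  have hTbound : |T| ≤ M₀ := by
    have h1' : |T| ≤ ∑' k, ‖g k‖ := by
      rw [hTdef, ← Real.norm_eq_abs]
      exact norm_tsum_le_tsum_norm (hsg.abs)
    have h2' : ∑' k, ‖g k‖ ≤ ∑' k, c₁ * Q ^ k := Summable.tsum_le_tsum hgb hsg.abs hgeo
    have h3' : ∑' k : ℕ, c₁ * Q ^ k = c₁ * (1-Q)⁻¹ := by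
      rw [tsum_mul_left, tsum_geometric_of_lt_one hQ0.le hQ1]
    rw [hM₀]; rw [h3'] at h2'
    calc |T| ≤ ∑' k, ‖g k‖ := h1'
      _ ≤ c₁ * (1-Q)⁻¹ := h2'
  have hprod : HasProd (fun k : ℕ => (1 - Q ^ (k+1)) / (1 - Q ^ ((k:ℝ) + s))) (Real.exp T) := by
    have h := hT.rexp
    have hfun : (Real.exp ∘ g) = fun k : ℕ => (1 - Q ^ (k+1)) / (1 - Q ^ ((k:ℝ) + s)) := by
      funext k
      simp only [Function.comp, hg]
      rw [Real.exp_sub, Real.exp_log (h1 k), Real.exp_log (h2 k)]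
    rwa [hfun] at h
  have htp : ∏' k : ℕ, (1 - Q ^ (k+1)) / (1 - Q ^ ((k:ℝ) + s)) = Real.exp T := hprod.tprod_eq
  have hrQ : (0:ℝ) < 1 - Q := by linarith
  constructor
  · rw [qGamma, htp]
    positivity
  · rw [qGamma, htp, mul_inv, ← Real.exp_neg, ← Real.rpow_neg hrQ.le]
    have h4 : Real.exp (-T) ≤ Real.exp M₀ :=
      Real.exp_le_exp.mpr (by linarith [neg_le_abs T])
    have h5 : (-(1-s)) = s - 1 := by ring
    rw [h5]
    calc (1-Q)^(s-1) * Real.exp (-T) ≤ (1-Q)^(s-1) * Real.exp M₀ :=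
          mul_le_mul_of_nonneg_left h4 (Real.rpow_nonneg hrQ.le _)
      _ = Real.exp M₀ * (1-Q)^(s-1) := mul_comm _ _

lemma tri_succ (n : ℕ) : (n+1) * n / 2 = n * (n-1) / 2 + n := by
  have h2 : (n+1)*n = n*(n-1) + 2*n := by
    cases n with
    | zero => rfl
    | succ m => simp only [Nat.succ_sub_one]; ring
  omega

lemma summable_qExpE_terms {Q : ℝ} (hQ0 : 0 < Q) (hQ1 : Q < 1) {w : ℝ} (hw : 0 < w) :
    Summable (fun j : ℕ => Q ^ (j * (j - 1) / 2) * w ^ j / qFact Q j) := by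
  have hF := qFact_pos hQ0 hQ1
  apply summable_of_ratio_test_tendsto_lt_one (l := 0) one_pos
  · filter_upwards with n
    have hpos : 0 < Q ^ (n * (n - 1) / 2) * w ^ n / qFact Q n := div_pos (by positivity) (hF n)
    exact hpos.ne'
  · have key : ∀ n : ℕ, ‖Q ^ ((n+1) * ((n+1) - 1) / 2) * w ^ (n+1) / qFact Q (n+1)‖ /
        ‖Q ^ (n * (n - 1) / 2) * w ^ n / qFact Q n‖ = Q ^ n * w / qNum Q ((n:ℝ)+1) := by
      intro n
      have hN := qNum_pos hQ0 hQ1 (u := (n:ℝ)+1) (by positivity)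
      rw [Real.norm_eq_abs, Real.norm_eq_abs, abs_of_pos (div_pos (by positivity) (hF _)),
        abs_of_pos (div_pos (by positivity) (hF _))]
      have he : (n+1) * ((n+1) - 1) / 2 = n * (n-1) / 2 + n := by
        simpa using tri_succ n
      rw [he, pow_add, qFact_succ]
      have h1 : qFact Q n ≠ 0 := (hF n).ne'
      have h2 : qNum Q ((n:ℝ)+1) ≠ 0 := hN.ne'
      have h3 : Q ^ (n * (n-1)/2) ≠ 0 := by positivity
      have h4 : w ^ n ≠ 0 := by positivity
      field_simp
      ring
    simp only [key]
    have hle : ∀ n : ℕ, Q ^ n * w / qNum Q ((n:ℝ)+1) ≤ Q ^ n * w := by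
      intro n
      have hN := qNum_pos hQ0 hQ1 (u := (n:ℝ)+1) (by positivity)
      rw [div_le_iff₀ hN]
      have h5 := one_le_qNum hQ0 hQ1 (u := (n:ℝ)+1)
        (by linarith [Nat.cast_nonneg (α := ℝ) n])
      nlinarith [mul_le_mul_of_nonneg_left h5 (by positivity : (0:ℝ) ≤ Q ^ n * w)]
    have hnn : ∀ n : ℕ, 0 ≤ Q ^ n * w / qNum Q ((n:ℝ)+1) := by
      intro n
      have hN := qNum_pos hQ0 hQ1 (u := (n:ℝ)+1) (by positivity)
      positivity
    exact squeeze_zero hnn hle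
      (by simpa using (tendsto_pow_atTop_nhds_zero_of_lt_one hQ0.le hQ1).mul_const w)

lemma one_le_qExpE {Q w : ℝ} (hQ0 : 0 < Q) (hQ1 : Q < 1) (hw : 0 < w) : 1 ≤ qExpE Q w := by
  have hs := summable_qExpE_terms hQ0 hQ1 hw
  have h0 := Summable.le_tsum hs 0 (fun j _ => by
    have := qFact_pos hQ0 hQ1 j
    positivity)
  simpa [qFact, qExpE] using h0

lemma qExpE_pos {Q w : ℝ} (hQ0 : 0 < Q) (hQ1 : Q < 1) (hw : 0 < w) : 0 < qExpE Q w :=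
  lt_of_lt_of_le one_pos (one_le_qExpE hQ0 hQ1 hw)

lemma qExpE_ge_term {Q w : ℝ} (hQ0 : 0 < Q) (hQ1 : Q < 1) (hw : 0 < w) (j : ℕ) :
    Q ^ (j * (j - 1) / 2) * ((1 - Q) * w) ^ j ≤ qExpE Q w := by
  have hs := summable_qExpE_terms hQ0 hQ1 hw
  have h0 := Summable.le_tsum hs j (fun i _ => by
    have := qFact_pos hQ0 hQ1 i
    positivity)
  refine le_trans ?_ h0
  have hF1 := qFact_pos hQ0 hQ1 j
  have hF2 := qFact_le hQ0 hQ1 j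
  have hinv : (1-Q)^j ≤ (qFact Q j)⁻¹ := by
    have h7 := inv_anti₀ hF1 hF2
    rwa [← inv_pow, inv_inv] at h7
  calc Q ^ (j*(j-1)/2) * ((1-Q)*w)^j = Q ^ (j*(j-1)/2) * w^j * (1-Q)^j := by
        rw [mul_pow]; ring
    _ ≤ Q ^ (j*(j-1)/2) * w^j * (qFact Q j)⁻¹ :=
        mul_le_mul_of_nonneg_left hinv (by positivity)
    _ = Q ^ (j*(j-1)/2) * w^j / qFact Q j := by rw [div_eq_mul_inv]

/-- Coefficients of the second q-Bessel function. -/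
def bcoef (q ν : ℝ) (i : ℕ) : ℝ :=
  q ^ (2 * (i : ℝ) * ((i : ℝ) + ν)) * (-1 : ℝ) ^ i /
    (qFact (q ^ 2) i * qGamma (q ^ 2) ((i : ℝ) + ν + 1))

lemma qBessel2_eq (q ν x : ℝ) :
    qBessel2 q ν x = q ^ (ν ^ 2) * (x / (1 + q)) ^ ν *
      ∑' i : ℕ, bcoef q ν i * (x / (1 + q)) ^ (2 * i) := rfl

lemma sq_lt_one {q : ℝ} (hq0 : 0 < q) (hq1 : q < 1) : q ^ 2 < 1 := by nlinarith

/-- Bound on the Bessel coefficients. -/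
lemma bcoef_bound {q ν : ℝ} (hq0 : 0 < q) (hq1 : q < 1) (hν : -(1/2 : ℝ) ≤ ν) :
    ∃ C ρ : ℝ, 0 < C ∧ 0 < ρ ∧
      ∀ i : ℕ, |bcoef q ν i| ≤ C * (q ^ 2) ^ (i * i) * ρ ^ i := by
  have hQ0 : (0:ℝ) < q ^ 2 := by positivity
  have hQ1 : q ^ 2 < 1 := sq_lt_one hq0 hq1
  have hQl : (0:ℝ) < 1 - q ^ 2 := by linarith
  obtain ⟨C₀, hC₀, hΓ⟩ := qGamma_bound hQ0 hQ1
  refine ⟨C₀ * (1 - q^2) ^ ν, (1 - q^2) * q ^ (2*ν),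
    by positivity, by positivity, fun i => ?_⟩
  have hs : (1:ℝ)/2 ≤ (i:ℝ) + ν + 1 := by
    have := Nat.cast_nonneg (α := ℝ) i
    linarith
  obtain ⟨hΓpos, hΓinv⟩ := hΓ _ hs
  have hFpos := qFact_pos hQ0 hQ1 i
  have hF1 := one_le_qFact hQ0 hQ1 i
  have habs : |bcoef q ν i| = q ^ (2 * (i:ℝ) * ((i:ℝ) + ν)) /
      (qFact (q^2) i * qGamma (q^2) ((i:ℝ) + ν + 1)) := by
    rw [bcoef, abs_div, abs_mul, abs_pow, abs_neg, abs_one, one_pow, mul_one,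
      abs_of_pos (Real.rpow_pos_of_pos hq0 _), abs_of_pos (mul_pos hFpos hΓpos)]
  rw [habs]
  have step1 : q ^ (2 * (i:ℝ) * ((i:ℝ) + ν)) /
      (qFact (q^2) i * qGamma (q^2) ((i:ℝ) + ν + 1))
      ≤ q ^ (2 * (i:ℝ) * ((i:ℝ) + ν)) * (C₀ * (1-q^2) ^ ((i:ℝ) + ν)) := by
    rw [div_eq_mul_inv]
    apply mul_le_mul_of_nonneg_left ?_ (Real.rpow_pos_of_pos hq0 _).le
    rw [mul_inv]
    have h1 : (qFact (q^2) i)⁻¹ ≤ 1 := by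
      rw [inv_le_one_iff₀]; right; exact hF1
    have h2 : (qGamma (q^2) ((i:ℝ)+ν+1))⁻¹ ≤ C₀ * (1-q^2) ^ (((i:ℝ)+ν+1) - 1) := hΓinv
    have h3 : ((i:ℝ)+ν+1) - 1 = (i:ℝ)+ν := by ring
    rw [h3] at h2
    calc (qFact (q^2) i)⁻¹ * (qGamma (q^2) ((i:ℝ)+ν+1))⁻¹
        ≤ 1 * (C₀ * (1-q^2) ^ ((i:ℝ)+ν)) := by
          apply mul_le_mul h1 h2 (by positivity) (by norm_num)
      _ = C₀ * (1-q^2) ^ ((i:ℝ)+ν) := one_mul _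
  refine step1.trans (le_of_eq ?_)
  -- rewrite rpow products into the displayed form
  have e1 : q ^ (2 * (i:ℝ) * ((i:ℝ) + ν)) = (q^2)^(i*i) * (q ^ (2*ν)) ^ i := by
    have : 2 * (i:ℝ) * ((i:ℝ) + ν) = ((2 * (i*i) : ℕ) : ℝ) + (2*ν) * (i:ℝ) := by
      push_cast; ring
    rw [this, Real.rpow_add hq0, Real.rpow_natCast, ← Real.rpow_natCast q (2*(i*i))]
    congr 1
    · rw [Real.rpow_natCast, pow_mul]
    · rw [← Real.rpow_natCast (q ^ (2*ν)) i, ← Real.rpow_mul hq0.le]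
  have e2 : (1-q^2) ^ ((i:ℝ) + ν) = (1-q^2) ^ ν * ((1-q^2 : ℝ)) ^ (i:ℕ) := by
    rw [Real.rpow_add hQl, mul_comm, Real.rpow_natCast]
  rw [e1, e2, mul_pow]
  ring

lemma bessel_summable {q ν y : ℝ} (hq0 : 0 < q) (hq1 : q < 1) (hν : -(1/2 : ℝ) ≤ ν)
    (hy : 0 < y) : Summable (fun i : ℕ => bcoef q ν i * y ^ (2 * i)) := by
  have hQ0 : (0:ℝ) < q ^ 2 := by positivity
  have hQ1 : q ^ 2 < 1 := sq_lt_one hq0 hq1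
  obtain ⟨C, ρ, hC, hρ, hb⟩ := bcoef_bound hq0 hq1 hν
  refine Summable.of_norm_bounded (g := fun i => C * ((q^2) ^ (i*i) * (ρ * y^2) ^ i)) ?_ ?_
  · exact (summable_qnn hQ0 hQ1 (by positivity)).mul_left C
  · intro i
    rw [Real.norm_eq_abs, abs_mul, abs_pow, abs_of_pos hy]
    calc |bcoef q ν i| * y ^ (2*i) ≤ (C * (q^2)^(i*i) * ρ^i) * y ^ (2*i) := by
          apply mul_le_mul_of_nonneg_right (hb i) (by positivity)
      _ = C * ((q^2)^(i*i) * (ρ * y^2)^i) := by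
          rw [pow_mul, mul_pow]; ring

lemma bessel_tsum_bound {q ν y : ℝ} (hq0 : 0 < q) (hq1 : q < 1) (hν : -(1/2 : ℝ) ≤ ν)
    {C ρ : ℝ} (hC : 0 < C) (hρ : 0 < ρ)
    (hb : ∀ i : ℕ, |bcoef q ν i| ≤ C * (q ^ 2) ^ (i * i) * ρ ^ i)
    (hy : 0 < y) :
    |∑' i : ℕ, bcoef q ν i * y ^ (2 * i)| ≤ C * ∑' i : ℕ, (q^2) ^ (i*i) * (ρ * y^2) ^ i := by
  have hQ0 : (0:ℝ) < q ^ 2 := by positivity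
  have hQ1 : q ^ 2 < 1 := sq_lt_one hq0 hq1
  have hsum := bessel_summable hq0 hq1 hν hy (q := q) (ν := ν)
  have hmaj : Summable (fun i : ℕ => (q^2) ^ (i*i) * (ρ * y^2) ^ i) :=
    summable_qnn hQ0 hQ1 (by positivity)
  calc |∑' i : ℕ, bcoef q ν i * y ^ (2*i)| ≤ ∑' i : ℕ, |bcoef q ν i * y ^ (2*i)| := by
        rw [← Real.norm_eq_abs]
        exact norm_tsum_le_tsum_norm hsum.abs
    _ ≤ ∑' i : ℕ, C * ((q^2) ^ (i*i) * (ρ * y^2) ^ i) := by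
        apply Summable.tsum_le_tsum ?_ hsum.abs (hmaj.mul_left C)
        intro i
        rw [abs_mul, abs_pow, abs_of_pos hy]
        calc |bcoef q ν i| * y ^ (2*i) ≤ (C * (q^2)^(i*i) * ρ^i) * y ^ (2*i) := by
              apply mul_le_mul_of_nonneg_right (hb i) (by positivity)
          _ = C * ((q^2)^(i*i) * (ρ * y^2)^i) := by rw [pow_mul, mul_pow]; ring
    _ = C * ∑' i : ℕ, (q^2) ^ (i*i) * (ρ * y^2) ^ i := tsum_mul_left

/-- The key coefficient recurrence. -/
lemma bcoef_rec {q : ℝ} (ν : ℝ) (hq0 : 0 < q) (hq1 : q < 1) (j : ℕ) :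
    bcoef q (ν-1) (j+1) * (1 - ((q ^ (2*(j+1)) : ℝ))⁻¹)
      = (1 - q^2) * q ^ (2*ν-2) * bcoef q ν j := by
  have hQ0 : (0:ℝ) < q ^ 2 := by positivity
  have hQ1 : q ^ 2 < 1 := sq_lt_one hq0 hq1
  have hΓarg : (((j+1 : ℕ) : ℝ)) + (ν-1) + 1 = (j:ℝ) + ν + 1 := by push_cast; ring
  rw [bcoef, bcoef, hΓarg, qFact_succ]
  set F := qFact (q^2) j with hF
  set G := qGamma (q^2) ((j:ℝ) + ν + 1) with hG
  set N := qNum (q^2) ((j:ℝ) + 1) with hN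
  have hFpos := qFact_pos hQ0 hQ1 j
  have hNpos : 0 < N := qNum_pos hQ0 hQ1 (by positivity)
  have hQj : ((q^2 : ℝ)) ^ ((j:ℝ)+1) = q ^ (2*(j+1)) := by
    rw [← Real.rpow_natCast q 2, ← Real.rpow_mul hq0.le, ← Real.rpow_natCast q (2*(j+1))]
    congr 1
    push_cast; ring
  by_cases hGz : G = 0
  · simp [hGz]
  · -- main case
    have hNval : N = (q ^ (2*(j+1)) - 1) / (q^2 - 1) := by rw [hN, qNum, hQj]
    have hPpos : (0:ℝ) < q ^ (2*(j+1)) := by positivity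
    have hPlt : q ^ (2*(j+1)) < 1 := pow_lt_one₀ hq0.le hq1 (by omega)
    have hPne : q ^ (2*(j+1)) - 1 ≠ 0 := by linarith
    have hq2ne : q^2 - 1 ≠ 0 := by nlinarith
    -- exponent identity
    have hexp : q ^ (2 * (((j+1):ℕ):ℝ) * ((((j+1):ℕ):ℝ) + (ν-1)))
        = q ^ (2*ν-2) * q ^ (2 * (j:ℝ) * ((j:ℝ) + ν)) * q ^ (2*(j+1)) := by
      rw [← Real.rpow_natCast q (2*(j+1)), ← Real.rpow_add hq0, ← Real.rpow_add hq0]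
      congr 1
      push_cast; ring
    rw [hexp]
    have hm1 : ((-1:ℝ)) ^ (j+1) = -((-1:ℝ))^j := by rw [pow_succ]; ring
    rw [hm1, hNval]
    field_simp
    ring

/-- The integrand kernel of the second q-Hankel transform. -/
def hker (q μ ν r t : ℝ) : ℝ :=
  qBessel2 q ν (q * ((1 + q) / μ) * (r * t)) / (r * t) ^ ν * t ^ (2 * ν + 1)

lemma ker_eq {q μ r t : ℝ} (ν : ℝ) (hq0 : 0 < q) (hq1 : q < 1) (hμ : 0 < μ)
    (hr : 0 < r) (ht : 0 < t) :
    hker q μ ν r t = q ^ (ν^2) * (q/μ) ^ ν * t ^ (2*ν+1) *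
      ∑' i : ℕ, bcoef q ν i * ((q/μ) * r * t) ^ (2*i) := by
  have h1q : (0:ℝ) < 1 + q := by linarith
  have harg : q * ((1+q)/μ) * (r*t) / (1+q) = (q/μ) * r * t := by field_simp
  rw [hker, qBessel2_eq, harg]
  have hd : (0:ℝ) < q/μ := by positivity
  have h2 : ((q/μ) * r * t) ^ ν = (q/μ)^ν * (r*t)^ν := by
    rw [mul_assoc, Real.mul_rpow hd.le (by positivity)]
  rw [h2]
  have hrt : ((r*t) : ℝ) ^ ν ≠ 0 := (Real.rpow_pos_of_pos (by positivity) ν).ne'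
  field_simp

lemma hker_shift {q μ ν r t : ℝ} (hq0 : 0 < q) (hr : 0 < r) (ht : 0 < t) :
    hker q μ ν (q⁻¹ * r) (q * t) = q ^ (2*ν+1) * hker q μ ν r t := by
  have hqne : q ≠ 0 := hq0.ne'
  have harg : (q⁻¹ * r) * (q * t) = r * t := by field_simp
  rw [hker, hker, harg]
  have h2 : (q*t) ^ (2*ν+1) = q ^ (2*ν+1) * t ^ (2*ν+1) := Real.mul_rpow hq0.le ht.le
  rw [h2]; ring

lemma star {q μ ν r t : ℝ} (hq0 : 0 < q) (hq1 : q < 1) (hμ : 0 < μ) (hν : 1/2 ≤ ν)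
    (hr : 0 < r) (ht : 0 < t) :
    hker q μ (ν-1) r t - (q ^ (2*ν))⁻¹ * hker q μ (ν-1) (q⁻¹*r) t
      = (1 - q) * ((1+q)/μ * r^2 * hker q μ ν r t
          - qNum q (2*ν) / q ^ (2*ν) * hker q μ (ν-1) (q⁻¹*r) t) := by
  have hqne : q ≠ 0 := hq0.ne'
  have hd : (0:ℝ) < q/μ := by positivity
  have hν' : -(1/2 : ℝ) ≤ ν - 1 := by linarith
  set d : ℝ := q/μ with hdd
  set z : ℝ := d * r * t with hzd
  have hz : 0 < z := by positivity
  have hzq : 0 < z/q := by positivity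
  have hr' : 0 < q⁻¹ * r := by positivity
  have hbase : d * (q⁻¹*r) * t = z/q := by rw [hzd]; field_simp
  have A1 := ker_eq (ν-1) hq0 hq1 hμ hr ht (q := q) (μ := μ) (t := t)
  have A2 := ker_eq (ν-1) hq0 hq1 hμ hr' ht (q := q) (μ := μ) (t := t)
  have A3 := ker_eq ν hq0 hq1 hμ hr ht (q := q) (μ := μ) (t := t)
  rw [hbase] at A2
  set T : ℝ := ∑' i : ℕ, bcoef q (ν-1) i * z ^ (2*i) with hT
  set T' : ℝ := ∑' i : ℕ, bcoef q (ν-1) i * (z/q) ^ (2*i) with hT'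
  set U : ℝ := ∑' i : ℕ, bcoef q ν i * z ^ (2*i) with hU
  -- KEY identity
  have hsT : Summable (fun i : ℕ => bcoef q (ν-1) i * z ^ (2*i)) :=
    bessel_summable hq0 hq1 hν' hz
  have hsT' : Summable (fun i : ℕ => bcoef q (ν-1) i * (z/q) ^ (2*i)) :=
    bessel_summable hq0 hq1 hν' hzq
  have hsU : Summable (fun i : ℕ => bcoef q ν i * z ^ (2*i)) :=
    bessel_summable hq0 hq1 (by linarith) hz
  set g : ℕ → ℝ := fun i => bcoef q (ν-1) i * z ^ (2*i) - bcoef q (ν-1) i * (z/q) ^ (2*i)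
    with hgdef
  have hgs : ∀ j : ℕ, g (j+1) = (1-q^2) * q^(2*ν-2) * z^2 * (bcoef q ν j * z^(2*j)) := by
    intro j
    have hstep : g (j+1)
        = bcoef q (ν-1) (j+1) * (1 - ((q ^ (2*(j+1)) : ℝ))⁻¹) * z^(2*(j+1)) := by
      show bcoef q (ν-1) (j+1) * z ^ (2*(j+1)) - bcoef q (ν-1) (j+1) * (z/q) ^ (2*(j+1)) = _
      rw [div_pow, div_eq_mul_inv]
      ring
    rw [hstep, bcoef_rec ν hq0 hq1 j, show 2*(j+1) = 2*j+2 from by ring, pow_add]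
    ring
  have hsg1 : Summable (fun j : ℕ => g (j+1)) := by
    apply Summable.congr ((hsU.mul_left ((1-q^2) * q^(2*ν-2) * z^2)))
    intro j
    rw [hgs j]
  have hsg : Summable g := (summable_nat_add_iff 1).mp hsg1
  have hg0 : g 0 = 0 := by simp [hgdef]
  have KEY : T - T' = (1-q^2) * q^(2*ν-2) * z^2 * U := by
    rw [hT, hT', ← Summable.tsum_sub hsT hsT']
    have h5 : ∑' i : ℕ, g i = (1-q^2) * q^(2*ν-2) * z^2 * U := by
      rw [Summable.tsum_eq_zero_add hsg, hg0, zero_add]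
      calc ∑' j : ℕ, g (j+1)
          = ∑' j : ℕ, (1-q^2) * q^(2*ν-2) * z^2 * (bcoef q ν j * z^(2*j)) :=
            tsum_congr hgs
        _ = (1-q^2) * q^(2*ν-2) * z^2 * U := by rw [hU, tsum_mul_left]
    exact h5
  -- rpow facts
  have hq2ν : (0:ℝ) < q ^ (2*ν) := Real.rpow_pos_of_pos hq0 _
  have fact1 : q ^ (ν^2) = q ^ ((ν-1)^2) * (q ^ (2*ν-2) * q) := by
    have h := Real.rpow_add hq0 ((ν-1)^2) ((2*ν-2) + 1)
    rw [Real.rpow_add hq0 (2*ν-2) 1, Real.rpow_one] at h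
    rw [← h]
    congr 1
    ring
  have fact2 : d ^ ν = d ^ (ν-1) * d := by
    have h := Real.rpow_add hd (ν-1) 1
    rw [Real.rpow_one] at h
    rw [← h]
    congr 1
    ring
  have fact3 : t ^ (2*ν+1) = t ^ (2*(ν-1)+1) * t^2 := by
    rw [← Real.rpow_natCast t 2, ← Real.rpow_add ht]
    congr 1
    push_cast; ring
  have fact4 : (1-q) * (qNum q (2*ν) / q ^ (2*ν)) = (q ^ (2*ν))⁻¹ - 1 := by
    rw [qNum]
    have h1 : q - 1 ≠ 0 := by intro h; nlinarith
    have h2 : (q ^ (2*ν)) ≠ 0 := hq2ν.ne'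
    field_simp
    ring
  rw [A1, A2, A3, fact1, fact2, fact3]
  linear_combination (q ^ ((ν-1)^2) * d ^ (ν-1) * t ^ (2*(ν-1)+1)) * KEY
    + (q ^ ((ν-1)^2) * d ^ (ν-1) * t ^ (2*(ν-1)+1) * T') * fact4

lemma npred_even_cancel (n : ℕ) : 2 * (n * (n-1) / 2) = n * (n-1) := by
  have he : Even (n * (n-1)) := by
    cases n with
    | zero => simp
    | succ m => simpa [Nat.succ_sub_one, mul_comm] using Nat.even_mul_succ_self m
  obtain ⟨r, hr⟩ := he
  omega

lemma crux {q : ℝ} (hq0 : 0 < q) (hq1 : q < 1) {a₁ w₁ : ℝ} (ha₁ : 0 < a₁) (hw₁ : 0 < w₁) :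
    ∃ C B : ℝ, 0 < C ∧ 0 < B ∧ ∀ n : ℕ,
      (∑' i : ℕ, (q^2) ^ (i*i) * (a₁ / (q^2)^n) ^ i) *
          ((q^2) ^ (n*(n-1)/2) * (w₁ / (q^2)^n) ^ n)⁻¹
        ≤ C * ((n:ℝ)+1) * (q ^ ((1:ℝ)/2)) ^ (n*n) * B ^ n := by
  set σ : ℝ := q ^ ((1:ℝ)/2) with hσdef
  have hσ0 : 0 < σ := Real.rpow_pos_of_pos hq0 _
  have hσ1 : σ < 1 := Real.rpow_lt_one hq0.le hq1 (by norm_num)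
  have hσ2 : σ^2 = q := by
    rw [hσdef, ← Real.rpow_natCast (q ^ ((1:ℝ)/2)) 2, ← Real.rpow_mul hq0.le]
    norm_num
  have hσ4 : q^2 = σ^4 := by rw [← hσ2]; ring
  set A : ℝ := max a₁ 1 with hA
  have hA1 : 1 ≤ A := le_max_right _ _
  have hA0 : 0 < A := lt_of_lt_of_le one_pos hA1
  have haA : a₁ ≤ A := le_max_left _ _
  set K₂ : ℝ := ∑' j : ℕ, σ ^ (j*j) * A ^ j with hK₂
  have hsK₂ : Summable (fun j : ℕ => σ ^ (j*j) * A ^ j) := summable_qnn hσ0 hσ1 hA0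
  have hK₂0 : 0 ≤ K₂ := tsum_nonneg fun j => by positivity
  refine ⟨1 + A * K₂, q * A / w₁, by positivity, by positivity, fun n => ?_⟩
  have hQn : (0:ℝ) < (q^2)^n := by positivity
  set b : ℝ := a₁ / (q^2)^n with hb
  have hb0 : 0 < b := by positivity
  have hs : Summable (fun i : ℕ => (q^2) ^ (i*i) * b ^ i) :=
    summable_qnn (by positivity) (sq_lt_one hq0 hq1) hb0
  -- rewrite the general term in σ-zpow normal form
  have hterm : ∀ i : ℕ, (q^2) ^ (i*i) * b ^ i
      = a₁ ^ i * σ ^ (4*(i:ℤ)*i - 4*(n:ℤ)*i) := by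
    intro i
    have h1 : ((q^2) ^ (i*i) : ℝ) = σ ^ ((4*(i:ℤ)*i)) := by
      rw [hσ4, ← pow_mul, ← zpow_natCast σ (4*(i*i))]
      congr 1
      push_cast; ring
    have h2 : (b ^ i : ℝ) = a₁ ^ i * σ ^ (-(4*(n:ℤ)*i)) := by
      rw [hb, div_pow, ← pow_mul]
      rw [show ((q^2)^(n*i) : ℝ) = σ ^ ((4*(n:ℤ)*i)) from by
        rw [hσ4, ← pow_mul, ← zpow_natCast σ (4*(n*i))]; congr 1; push_cast; ring]
      rw [div_eq_mul_inv, ← zpow_neg]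
    rw [h1, h2, mul_comm (σ ^ (4*(i:ℤ)*i)) _, mul_assoc, ← zpow_add₀ hσ0.ne']
    congr 2
    ring
  -- bound on the finite part
  have hfin : ∀ i ∈ Finset.range (n+1), (q^2) ^ (i*i) * b ^ i
      ≤ σ ^ (-((n:ℤ)*n)) * A ^ n := by
    intro i hi
    have hi' : i ≤ n := Nat.lt_succ_iff.mp (Finset.mem_range.mp hi)
    rw [hterm i]
    have hz : σ ^ (4*(i:ℤ)*i - 4*(n:ℤ)*i) ≤ σ ^ (-((n:ℤ)*n)) := by
      apply zpow_le_zpow_right_of_le_one₀ hσ0 hσ1.le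
      nlinarith [sq_nonneg (2*(i:ℤ) - n)]
    have hai : a₁ ^ i ≤ A ^ n :=
      le_trans (pow_le_pow_left₀ ha₁.le haA i) (pow_le_pow_right₀ hA1 hi')
    calc a₁ ^ i * σ ^ (4*(i:ℤ)*i - 4*(n:ℤ)*i) ≤ A ^ n * σ ^ (-((n:ℤ)*n)) := by
          apply mul_le_mul hai hz (by positivity) (by positivity)
      _ = σ ^ (-((n:ℤ)*n)) * A ^ n := mul_comm _ _
  -- bound on the tail
  have htail : ∀ j : ℕ, (q^2) ^ ((n+1+j)*(n+1+j)) * b ^ (n+1+j)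
      ≤ σ ^ (-((n:ℤ)*n)) * (A ^ (n+1) * (σ ^ (j*j) * A ^ j)) := by
    intro j
    rw [hterm (n+1+j)]
    set i : ℕ := n+1+j with hi
    have hz : σ ^ (4*(i:ℤ)*i - 4*(n:ℤ)*i) ≤ σ ^ (-((n:ℤ)*n) + (j:ℤ)*j) := by
      apply zpow_le_zpow_right_of_le_one₀ hσ0 hσ1.le
      have : (i:ℤ) = (n:ℤ) + 1 + j := by rw [hi]; push_cast; ring
      rw [this]
      nlinarith [sq_nonneg ((n:ℤ) + 2*j + 2), (Int.natCast_nonneg n), (Int.natCast_nonneg j)]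
    have hai : a₁ ^ i ≤ A ^ i := pow_le_pow_left₀ ha₁.le haA i
    calc a₁ ^ i * σ ^ (4*(i:ℤ)*i - 4*(n:ℤ)*i)
        ≤ A ^ i * σ ^ (-((n:ℤ)*n) + (j:ℤ)*j) := by
          apply mul_le_mul hai hz (by positivity) (by positivity)
      _ = σ ^ (-((n:ℤ)*n)) * (A ^ (n+1) * (σ ^ (j*j) * A ^ j)) := by
          rw [zpow_add₀ hσ0.ne', hi, pow_add]
          rw [show σ ^ ((j:ℤ)*j) = σ ^ (j*j) from by
            rw [← zpow_natCast σ (j*j)]; congr 1 <;> (push_cast; try ring)]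
          ring
  -- assemble the sum bound
  have hsplit := (Summable.sum_add_tsum_nat_add (f := fun i : ℕ => (q^2) ^ (i*i) * b ^ i) (n+1) hs).symm
  have htail_sum : ∑' j : ℕ, (q^2) ^ ((n+1+j)*(n+1+j)) * b ^ (n+1+j)
      ≤ σ ^ (-((n:ℤ)*n)) * A ^ (n+1) * K₂ := by
    have hs1 : Summable (fun j : ℕ => (q^2) ^ ((n+1+j)*(n+1+j)) * b ^ (n+1+j)) := by
      have := (summable_nat_add_iff (f := fun i : ℕ => (q^2) ^ (i*i) * b ^ i) (n+1)).mpr hs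
      exact this.congr (fun j => by rw [Nat.add_comm j (n+1)])
    calc ∑' j : ℕ, (q^2) ^ ((n+1+j)*(n+1+j)) * b ^ (n+1+j)
        ≤ ∑' j : ℕ, σ ^ (-((n:ℤ)*n)) * (A ^ (n+1) * (σ ^ (j*j) * A ^ j)) := by
          apply Summable.tsum_le_tsum htail hs1
          exact (hsK₂.mul_left _).mul_left _
      _ = σ ^ (-((n:ℤ)*n)) * A ^ (n+1) * K₂ := by
          rw [tsum_mul_left, tsum_mul_left, hK₂]
          ring
  have hfin_sum : ∑ i ∈ Finset.range (n+1), (q^2) ^ (i*i) * b ^ i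
      ≤ ((n:ℝ)+1) * (σ ^ (-((n:ℤ)*n)) * A ^ n) := by
    have := Finset.sum_le_card_nsmul (Finset.range (n+1)) _ _ hfin
    rw [Finset.card_range, nsmul_eq_mul] at this
    exact_mod_cast this
  have hS : ∑' i : ℕ, (q^2) ^ (i*i) * b ^ i
      ≤ σ ^ (-((n:ℤ)*n)) * A ^ n * (((n:ℝ)+1) * (1 + A * K₂)) := by
    have hshift : ∀ j : ℕ, (fun i : ℕ => (q^2) ^ (i*i) * b ^ i) (j + (n+1))
        = (q^2) ^ ((n+1+j)*(n+1+j)) * b ^ (n+1+j) := by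
      intro j; rw [Nat.add_comm j (n+1)]
    calc ∑' i : ℕ, (q^2) ^ (i*i) * b ^ i
        = ∑ i ∈ Finset.range (n+1), (q^2) ^ (i*i) * b ^ i
          + ∑' j : ℕ, (q^2) ^ ((n+1+j)*(n+1+j)) * b ^ (n+1+j) := by
          rw [hsplit]
          congr 1
          exact tsum_congr hshift
      _ ≤ ((n:ℝ)+1) * (σ ^ (-((n:ℤ)*n)) * A ^ n)
          + σ ^ (-((n:ℤ)*n)) * A ^ (n+1) * K₂ := add_le_add hfin_sum htail_sum
      _ ≤ σ ^ (-((n:ℤ)*n)) * A ^ n * (((n:ℝ)+1) * (1 + A * K₂)) := by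
          have h1 : (1:ℝ) ≤ (n:ℝ)+1 := by linarith [Nat.cast_nonneg (α := ℝ) n]
          have hpos : (0:ℝ) < σ ^ (-((n:ℤ)*n)) * A ^ n := by positivity
          have hps : A^(n+1) = A^n * A := pow_succ A n
          rw [hps]
          nlinarith [mul_nonneg (mul_nonneg hpos.le (mul_nonneg hA0.le hK₂0))
            (Nat.cast_nonneg (α := ℝ) n)]
  -- the E-term
  have hV : ((q^2) ^ (n*(n-1)/2) * (w₁ / (q^2)^n) ^ n)⁻¹
      = σ ^ (2*(n:ℤ)*n + 2*n) * w₁⁻¹ ^ n := by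
    have h1 : ((q^2) ^ (n*(n-1)/2) : ℝ) = σ ^ (2*((n:ℤ)*n) - 2*n) := by
      rw [hσ4, ← pow_mul, ← zpow_natCast σ (4*(n*(n-1)/2))]
      congr 1
      have h2 := npred_even_cancel n
      have h3 : 4*(n*(n-1)/2) = 2*(2*(n*(n-1)/2)) := by ring
      rw [h3, h2]
      cases n with
      | zero => simp
      | succ m => push_cast [Nat.succ_sub_one]; ring
    have h4 : ((w₁ / (q^2)^n) ^ n : ℝ) = w₁ ^ n * σ ^ (-(4*((n:ℤ)*n))) := by
      rw [div_pow, ← pow_mul]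
      rw [show ((q^2)^(n*n) : ℝ) = σ ^ ((4*((n:ℤ)*n))) from by
        rw [hσ4, ← pow_mul, ← zpow_natCast σ (4*(n*n))]; congr 1 <;> (push_cast; try ring)]
      rw [div_eq_mul_inv, ← zpow_neg]
    rw [h1, h4, mul_inv, mul_inv, ← zpow_neg, ← zpow_neg, inv_pow]
    have hzz : σ ^ (-(2*((n:ℤ)*n) - 2*n)) * σ ^ (-(-(4*((n:ℤ)*n))))
        = σ ^ (2*(n:ℤ)*n + 2*n) := by
      rw [← zpow_add₀ hσ0.ne']
      congr 1
      ring
    linear_combination ((w₁ ^ n)⁻¹) * hzz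
  rw [hV]
  have hVpos : (0:ℝ) < σ ^ (2*(n:ℤ)*n + 2*n) * w₁⁻¹ ^ n := by positivity
  calc (∑' i : ℕ, (q^2) ^ (i*i) * b ^ i) * (σ ^ (2*(n:ℤ)*n + 2*n) * w₁⁻¹ ^ n)
      ≤ (σ ^ (-((n:ℤ)*n)) * A ^ n * (((n:ℝ)+1) * (1 + A * K₂)))
          * (σ ^ (2*(n:ℤ)*n + 2*n) * w₁⁻¹ ^ n) :=
        mul_le_mul_of_nonneg_right hS hVpos.le
    _ = (1 + A * K₂) * ((n:ℝ)+1) * σ ^ (n*n) * (q * A / w₁) ^ n := by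
        have he : σ ^ (-((n:ℤ)*n)) * σ ^ (2*(n:ℤ)*n + 2*n) = σ ^ (n*n) * q ^ n := by
          rw [← zpow_add₀ hσ0.ne']
          have h5 : -((n:ℤ)*n) + (2*(n:ℤ)*n + 2*n) = ((n*n : ℕ) : ℤ) + ((2*n : ℕ) : ℤ) := by
            push_cast; ring
          rw [h5, zpow_add₀ hσ0.ne', zpow_natCast, zpow_natCast, pow_mul σ 2 n, hσ2]
        have hrw : (q * A / w₁)^n = q^n * A^n * w₁⁻¹^n := by
          rw [div_pow, mul_pow, inv_pow, div_eq_mul_inv]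
        rw [hrw]
        linear_combination (A ^ n * (((n:ℝ)+1) * (1 + A * K₂)) * w₁⁻¹ ^ n) * he

lemma pow_rpow_comm {x : ℝ} (hx : 0 < x) (y : ℝ) (n : ℕ) : ((x^n : ℝ))^y = (x^y)^n := by
  rw [← Real.rpow_natCast x n, ← Real.rpow_mul hx.le, mul_comm, Real.rpow_mul hx.le,
    Real.rpow_natCast]

lemma hker_abs_le {q μ ν' r' : ℝ} (hq0 : 0 < q) (hq1 : q < 1) (hμ : 0 < μ)
    (hν' : -(1/2 : ℝ) ≤ ν') (hr' : 0 < r') :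
    ∃ K ρ₂ : ℝ, 0 < K ∧ 0 < ρ₂ ∧ ∀ t : ℝ, 0 < t →
      |hker q μ ν' r' t| ≤ K * t ^ (2*ν'+1) * ∑' i : ℕ, (q^2)^(i*i) * (ρ₂ * t^2)^i := by
  obtain ⟨C₂, ρ, hC₂, hρ, hb⟩ := bcoef_bound hq0 hq1 hν'
  have hd : (0:ℝ) < q/μ := by positivity
  refine ⟨q^(ν'^2) * (q/μ)^ν' * C₂, ρ * ((q/μ)*r')^2, by
    have := Real.rpow_pos_of_pos hq0 (ν'^2)
    have := Real.rpow_pos_of_pos hd ν'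
    positivity, by positivity, fun t ht => ?_⟩
  have hy : 0 < (q/μ) * r' * t := by positivity
  rw [ker_eq ν' hq0 hq1 hμ hr' ht]
  have hP1 : (0:ℝ) < q^(ν'^2) := Real.rpow_pos_of_pos hq0 _
  have hP2 : (0:ℝ) < (q/μ)^ν' := Real.rpow_pos_of_pos hd _
  have hP3 : (0:ℝ) < t^(2*ν'+1) := Real.rpow_pos_of_pos ht _
  rw [abs_mul, abs_mul, abs_mul, abs_of_pos hP1, abs_of_pos hP2, abs_of_pos hP3]
  have hbd := bessel_tsum_bound hq0 hq1 hν' hC₂ hρ hb hy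
  have hcongr : ∑' i : ℕ, (q^2)^(i*i) * (ρ * ((q/μ)*r'*t)^2)^i
      = ∑' i : ℕ, (q^2)^(i*i) * ((ρ * ((q/μ)*r')^2) * t^2)^i := by
    apply tsum_congr; intro i
    congr 2
    ring
  rw [hcongr] at hbd
  calc q^(ν'^2) * (q/μ)^ν' * t^(2*ν'+1) * |∑' i : ℕ, bcoef q ν' i * ((q/μ)*r'*t)^(2*i)|
      ≤ q^(ν'^2) * (q/μ)^ν' * t^(2*ν'+1) *
        (C₂ * ∑' i : ℕ, (q^2)^(i*i) * ((ρ * ((q/μ)*r')^2) * t^2)^i) := by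
        apply mul_le_mul_of_nonneg_left hbd (by positivity)
    _ = q^(ν'^2) * (q/μ)^ν' * C₂ * t^(2*ν'+1) *
        ∑' i : ℕ, (q^2)^(i*i) * ((ρ * ((q/μ)*r')^2) * t^2)^i := by ring

lemma master_summable {q μ γ ν' r' cg Cg : ℝ} {Bg : ℕ}
    (hq0 : 0 < q) (hq1 : q < 1) (hμ : 0 < μ) (hγ : 0 < γ)
    (hν' : -(1/2 : ℝ) ≤ ν') (hr' : 0 < r') (hcg : 0 < cg) (hCg : 0 ≤ Cg)
    (g : ℝ → ℝ)
    (hg : ∀ t : ℝ, 0 < t → |g t| ≤ Cg * (max 1 t) ^ Bg * (qExpE (q^2) (cg * t^2))⁻¹) :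
    Summable (fun k : ℤ => hker q μ ν' r' (q^k * γ) * g (q^k * γ) * q^k) := by
  have hQ0 : (0:ℝ) < q^2 := by positivity
  have hQ1 : q^2 < 1 := sq_lt_one hq0 hq1
  obtain ⟨K, ρ₂, hK, hρ₂, hker_le⟩ := hker_abs_le hq0 hq1 hμ hν' hr'
  set γ₁ : ℝ := max 1 γ with hγ₁def
  have hγ₁ : (1:ℝ) ≤ γ₁ := le_max_left _ _
  have hγγ₁ : γ ≤ γ₁ := le_max_right _ _
  have hγ₁0 : (0:ℝ) < γ₁ := lt_of_lt_of_le one_pos hγ₁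
  have hexp0 : (0:ℝ) ≤ 2*ν'+1 := by linarith
  have htpos : ∀ k : ℤ, (0:ℝ) < q^k * γ := fun k => by
    have : (0:ℝ) < (q:ℝ)^k := zpow_pos hq0 k
    positivity
  -- general per-point bound
  have hEinv : ∀ t : ℝ, 0 < t → (qExpE (q^2) (cg * t^2))⁻¹ ≤ 1 := by
    intro t ht
    have h1 := one_le_qExpE hQ0 hQ1 (w := cg * t^2) (by positivity)
    rw [inv_le_one_iff₀]
    right; exact h1
  have hEinv0 : ∀ t : ℝ, 0 < t → 0 ≤ (qExpE (q^2) (cg * t^2))⁻¹ := by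
    intro t ht
    have h1 := qExpE_pos hQ0 hQ1 (w := cg * t^2) (by positivity)
    positivity
  have habs : ∀ k : ℤ, ‖hker q μ ν' r' (q^k * γ) * g (q^k * γ) * q^k‖
      ≤ K * (q^k*γ) ^ (2*ν'+1) * (∑' i : ℕ, (q^2)^(i*i) * (ρ₂ * (q^k*γ)^2)^i)
        * (Cg * (max 1 (q^k*γ)) ^ Bg * (qExpE (q^2) (cg * (q^k*γ)^2))⁻¹) * q^k := by
    intro k
    have ht := htpos k
    have hzp : (0:ℝ) < (q:ℝ)^k := zpow_pos hq0 k
    rw [Real.norm_eq_abs, abs_mul, abs_mul, abs_of_pos hzp]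
    have hΨ0 : (0:ℝ) ≤ ∑' i : ℕ, (q^2)^(i*i) * (ρ₂ * (q^k*γ)^2)^i :=
      tsum_nonneg fun i => by positivity
    apply mul_le_mul_of_nonneg_right ?_ hzp.le
    apply mul_le_mul (hker_le _ ht) (hg _ ht) (abs_nonneg _)
    have h3 : (0:ℝ) < (q^k*γ) ^ (2*ν'+1) := Real.rpow_pos_of_pos ht _
    positivity
  apply Summable.of_norm
  apply Summable.of_nat_of_neg
  -- nonnegative k
  · set Ψmax : ℝ := ∑' i : ℕ, (q^2)^(i*i) * (ρ₂ * γ₁^2)^i with hΨmax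
    have hsΨ : Summable (fun i : ℕ => (q^2)^(i*i) * (ρ₂ * γ₁^2)^i) :=
      summable_qnn hQ0 hQ1 (by positivity)
    have hΨ0 : 0 ≤ Ψmax := tsum_nonneg fun i => by positivity
    apply Summable.of_nonneg_of_le (fun n => norm_nonneg _)
      (f := fun n : ℕ => (K * γ₁ ^ (2*ν'+1) * Ψmax * (Cg * γ₁ ^ Bg)) * q^n)
    · intro n
      have hkn : ((q:ℝ) ^ ((n:ℤ)) : ℝ) = q ^ n := zpow_natCast q n
      have ht := htpos (n:ℤ)
      have htγ : q^(n:ℤ) * γ ≤ γ₁ := by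
        rw [hkn]
        calc q^n * γ ≤ 1 * γ := by
              apply mul_le_mul_of_nonneg_right (pow_le_one₀ hq0.le hq1.le) hγ.le
          _ = γ := one_mul γ
          _ ≤ γ₁ := hγγ₁
      refine (habs (n:ℤ)).trans ?_
      have h1 : (q^(n:ℤ)*γ) ^ (2*ν'+1) ≤ γ₁ ^ (2*ν'+1) :=
        Real.rpow_le_rpow ht.le htγ hexp0
      have h2 : (∑' i : ℕ, (q^2)^(i*i) * (ρ₂ * (q^(n:ℤ)*γ)^2)^i) ≤ Ψmax := by
        apply Summable.tsum_le_tsum ?_ (summable_qnn hQ0 hQ1 (by positivity)) hsΨ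
        intro i
        apply mul_le_mul_of_nonneg_left ?_ (by positivity)
        apply pow_le_pow_left₀ (by positivity)
        apply mul_le_mul_of_nonneg_left ?_ hρ₂.le
        apply pow_le_pow_left₀ ht.le htγ
      have h3 : (max 1 (q^(n:ℤ)*γ)) ^ Bg ≤ γ₁ ^ Bg := by
        apply pow_le_pow_left₀ (by positivity)
        exact max_le hγ₁ htγ
      have h4 := hEinv _ ht
      have h5 := hEinv0 _ ht
      rw [hkn]
      have hq2n : (0:ℝ) ≤ q ^ n := by positivity
      calc K * (q^(n:ℤ)*γ) ^ (2*ν'+1) * (∑' i : ℕ, (q^2)^(i*i) * (ρ₂ * (q^(n:ℤ)*γ)^2)^i)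
            * (Cg * (max 1 (q^(n:ℤ)*γ)) ^ Bg * (qExpE (q^2) (cg * (q^(n:ℤ)*γ)^2))⁻¹) * q^n
          ≤ K * γ₁ ^ (2*ν'+1) * Ψmax * (Cg * γ₁ ^ Bg * 1) * q^n := by
            apply mul_le_mul_of_nonneg_right ?_ hq2n
            have hΨnn : (0:ℝ) ≤ ∑' i : ℕ, (q^2)^(i*i) * (ρ₂ * (q^(n:ℤ)*γ)^2)^i :=
              tsum_nonneg fun i => by positivity
            have hA : K * (q^(n:ℤ)*γ) ^ (2*ν'+1) ≤ K * γ₁ ^ (2*ν'+1) :=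
              mul_le_mul_of_nonneg_left h1 hK.le
            have hB : K * (q^(n:ℤ)*γ) ^ (2*ν'+1)
                * (∑' i : ℕ, (q^2)^(i*i) * (ρ₂ * (q^(n:ℤ)*γ)^2)^i)
                ≤ K * γ₁ ^ (2*ν'+1) * Ψmax := by
              apply mul_le_mul hA h2 hΨnn
              positivity
            have hC : Cg * (max 1 (q^(n:ℤ)*γ)) ^ Bg * (qExpE (q^2) (cg * (q^(n:ℤ)*γ)^2))⁻¹
                ≤ Cg * γ₁ ^ Bg * 1 := by
              apply mul_le_mul (mul_le_mul_of_nonneg_left h3 hCg) h4 h5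
              positivity
            apply mul_le_mul hB hC (by positivity) (by positivity)
        _ = (K * γ₁ ^ (2*ν'+1) * Ψmax * (Cg * γ₁ ^ Bg)) * q^n := by ring
    · exact (summable_geometric_of_lt_one hq0.le hq1).mul_left _
  -- negative k
  · have hw₁ : (0:ℝ) < (1-q^2) * cg * γ^2 :=
      mul_pos (mul_pos (by linarith : (0:ℝ) < 1 - q^2) hcg) (by positivity)
    obtain ⟨CC, BB, hCC, hBB, hcrux⟩ :=
      crux hq0 hq1 (a₁ := ρ₂ * γ₁^2) (w₁ := (1-q^2) * cg * γ^2) (by positivity) hw₁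
    have hσ0 : (0:ℝ) < q ^ ((1:ℝ)/2) := Real.rpow_pos_of_pos hq0 _
    have hσ1 : q ^ ((1:ℝ)/2) < 1 := Real.rpow_lt_one hq0.le hq1 (by norm_num)
    set e₁ : ℝ := (q⁻¹) ^ (2*ν'+1) with he₁
    have he₁0 : 0 < e₁ := Real.rpow_pos_of_pos (by positivity) _
    set B' : ℝ := e₁ * (q⁻¹)^Bg * q⁻¹ * BB with hB'
    have hB'0 : 0 < B' := by positivity
    set KK : ℝ := K * γ₁ ^ (2*ν'+1) * Cg * γ₁ ^ Bg * CC with hKK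
    apply Summable.of_nonneg_of_le (fun n => norm_nonneg _)
      (f := fun n : ℕ => KK * (((n:ℝ)+1) * ((q ^ ((1:ℝ)/2)) ^ (n*n) * B' ^ n)))
    · intro n
      have ht := htpos (-(n:ℤ))
      have hqn0 : (0:ℝ) < q^n := by positivity
      have hkn : ((q:ℝ) ^ (-(n:ℤ)) : ℝ) = (q^n)⁻¹ := by rw [zpow_neg, zpow_natCast]
      have hXle : q^(-(n:ℤ)) * γ ≤ (q^n)⁻¹ * γ₁ := by
        rw [hkn]
        exact mul_le_mul_of_nonneg_left hγγ₁ (by positivity)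
      have hX2 : (q^(-(n:ℤ)) * γ)^2 = γ^2 / (q^2)^n := by
        rw [hkn, mul_pow, inv_pow, pow_right_comm, div_eq_mul_inv, mul_comm]
      have h1 : (q^(-(n:ℤ))*γ)^(2*ν'+1) ≤ e₁^n * γ₁^(2*ν'+1) := by
        calc (q^(-(n:ℤ))*γ)^(2*ν'+1) ≤ ((q^n)⁻¹ * γ₁)^(2*ν'+1) :=
              Real.rpow_le_rpow ht.le hXle hexp0
          _ = ((q^n)⁻¹)^(2*ν'+1) * γ₁^(2*ν'+1) :=
              Real.mul_rpow (by positivity) (by positivity)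
          _ = e₁^n * γ₁^(2*ν'+1) := by
              rw [he₁, ← inv_pow, pow_rpow_comm (by positivity : (0:ℝ) < q⁻¹)]
      have hbase : ρ₂ * (q^(-(n:ℤ))*γ)^2 ≤ (ρ₂ * γ₁^2) / (q^2)^n := by
        rw [hX2, mul_div_assoc']
        apply div_le_div_of_nonneg_right ?_ (by positivity)
        have : γ^2 ≤ γ₁^2 := pow_le_pow_left₀ hγ.le hγγ₁ 2
        nlinarith
      have h2 : (∑' i : ℕ, (q^2)^(i*i) * (ρ₂ * (q^(-(n:ℤ))*γ)^2)^i)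
          ≤ ∑' i : ℕ, (q^2)^(i*i) * ((ρ₂ * γ₁^2) / (q^2)^n)^i := by
        apply Summable.tsum_le_tsum ?_ (summable_qnn hQ0 hQ1 (by positivity))
          (summable_qnn hQ0 hQ1 (by positivity))
        intro i
        apply mul_le_mul_of_nonneg_left ?_ (by positivity)
        exact pow_le_pow_left₀ (by positivity) hbase i
      have hqninv1 : (1:ℝ) ≤ (q^n)⁻¹ := (one_le_inv₀ hqn0).mpr (pow_le_one₀ hq0.le hq1.le)
      have h3 : (max 1 (q^(-(n:ℤ))*γ)) ^ Bg ≤ ((q⁻¹)^Bg)^n * γ₁^Bg := by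
        have hm : max 1 (q^(-(n:ℤ))*γ) ≤ (q^n)⁻¹*γ₁ := by
          apply max_le ?_ hXle
          calc (1:ℝ) = 1 * 1 := (one_mul 1).symm
            _ ≤ (q^n)⁻¹ * γ₁ := mul_le_mul hqninv1 hγ₁ one_pos.le (by positivity)
        calc (max 1 (q^(-(n:ℤ))*γ))^Bg ≤ ((q^n)⁻¹*γ₁)^Bg :=
              pow_le_pow_left₀ (by positivity) hm Bg
          _ = ((q⁻¹)^Bg)^n * γ₁^Bg := by rw [mul_pow, ← inv_pow, pow_right_comm]
      have hw : (0:ℝ) < cg * (q^(-(n:ℤ))*γ)^2 := by positivity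
      have hPpos : (0:ℝ) < (q^2)^(n*(n-1)/2) * (((1-q^2)*cg*γ^2) / (q^2)^n)^n := by
        have hdiv : (0:ℝ) < ((1-q^2)*cg*γ^2) / (q^2)^n := div_pos hw₁ (by positivity)
        positivity
      have h4 : (qExpE (q^2) (cg * (q^(-(n:ℤ))*γ)^2))⁻¹
          ≤ ((q^2)^(n*(n-1)/2) * (((1-q^2)*cg*γ^2) / (q^2)^n)^n)⁻¹ := by
        have hterm := qExpE_ge_term hQ0 hQ1 hw n
        have heq : ((1 - q^2) * (cg * (q^(-(n:ℤ))*γ)^2)) = ((1-q^2)*cg*γ^2) / (q^2)^n := by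
          rw [hX2]
          field_simp
        rw [heq] at hterm
        exact inv_anti₀ hPpos hterm
      have hΨnn : (0:ℝ) ≤ ∑' i : ℕ, (q^2)^(i*i) * (ρ₂ * (q^(-(n:ℤ))*γ)^2)^i :=
        tsum_nonneg fun i => by positivity
      have hΨnn2 : (0:ℝ) ≤ ∑' i : ℕ, (q^2)^(i*i) * ((ρ₂ * γ₁^2) / (q^2)^n)^i :=
        tsum_nonneg fun i => by positivity
      have hΨE : (∑' i : ℕ, (q^2)^(i*i) * (ρ₂ * (q^(-(n:ℤ))*γ)^2)^i)
            * (qExpE (q^2) (cg * (q^(-(n:ℤ))*γ)^2))⁻¹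
          ≤ CC * ((n:ℝ)+1) * (q ^ ((1:ℝ)/2)) ^ (n*n) * BB ^ n := by
        refine le_trans (mul_le_mul h2 h4 (hEinv0 _ ht) hΨnn2) (hcrux n)
      refine (habs (-(n:ℤ))).trans ?_
      have he₁n : (0:ℝ) < e₁^n * γ₁^(2*ν'+1) := by
        have := Real.rpow_pos_of_pos hγ₁0 (2*ν'+1)
        positivity
      calc K * (q^(-(n:ℤ))*γ) ^ (2*ν'+1)
            * (∑' i : ℕ, (q^2)^(i*i) * (ρ₂ * (q^(-(n:ℤ))*γ)^2)^i)
            * (Cg * (max 1 (q^(-(n:ℤ))*γ)) ^ Bg * (qExpE (q^2) (cg * (q^(-(n:ℤ))*γ)^2))⁻¹)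
            * q^(-(n:ℤ))
          = (K * (q^(-(n:ℤ))*γ) ^ (2*ν'+1)) * (Cg * (max 1 (q^(-(n:ℤ))*γ)) ^ Bg)
            * ((∑' i : ℕ, (q^2)^(i*i) * (ρ₂ * (q^(-(n:ℤ))*γ)^2)^i)
              * (qExpE (q^2) (cg * (q^(-(n:ℤ))*γ)^2))⁻¹) * (q⁻¹)^n := by
            rw [zpow_neg, zpow_natCast, ← inv_pow]
            ring
        _ ≤ (K * (e₁^n * γ₁^(2*ν'+1))) * (Cg * (((q⁻¹)^Bg)^n * γ₁^Bg))
            * (CC * ((n:ℝ)+1) * (q ^ ((1:ℝ)/2)) ^ (n*n) * BB ^ n) * (q⁻¹)^n := by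
            apply mul_le_mul_of_nonneg_right ?_ (by positivity)
            have hf1 : K * (q^(-(n:ℤ))*γ) ^ (2*ν'+1) ≤ K * (e₁^n * γ₁^(2*ν'+1)) :=
              mul_le_mul_of_nonneg_left h1 hK.le
            have hf2 : Cg * (max 1 (q^(-(n:ℤ))*γ)) ^ Bg ≤ Cg * (((q⁻¹)^Bg)^n * γ₁^Bg) :=
              mul_le_mul_of_nonneg_left h3 hCg
            have hf12 : (K * (q^(-(n:ℤ))*γ) ^ (2*ν'+1)) * (Cg * (max 1 (q^(-(n:ℤ))*γ)) ^ Bg)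
                ≤ (K * (e₁^n * γ₁^(2*ν'+1))) * (Cg * (((q⁻¹)^Bg)^n * γ₁^Bg)) := by
              apply mul_le_mul hf1 hf2 ?_ ?_
              · have : (0:ℝ) ≤ (max 1 (q^(-(n:ℤ))*γ)) ^ Bg := by positivity
                positivity
              · positivity
            apply mul_le_mul hf12 hΨE
            · exact mul_nonneg hΨnn (hEinv0 _ ht)
            · have h0 : (0:ℝ) < K * (e₁^n * γ₁^(2*ν'+1)) := by positivity
              have h00 : (0:ℝ) ≤ Cg * (((q⁻¹)^Bg)^n * γ₁^Bg) :=
                mul_nonneg hCg (by positivity)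
              positivity
        _ = KK * (((n:ℝ)+1) * ((q ^ ((1:ℝ)/2)) ^ (n*n) * B' ^ n)) := by
            rw [hKK, hB']
            ring
    · exact (summable_qnn_mul hσ0 hσ1 hB'0).mul_left KK

lemma poly_bound (p : Polynomial ℝ) : ∃ C : ℝ, 0 ≤ C ∧ ∀ x : ℝ, 0 ≤ x →
    |p.eval x| ≤ C * (max 1 x) ^ p.natDegree := by
  refine ⟨∑ i ∈ Finset.range (p.natDegree + 1), |p.coeff i|, by positivity, fun x hx => ?_⟩
  have hM : (1:ℝ) ≤ max 1 x := le_max_left _ _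
  rw [Polynomial.eval_eq_sum_range]
  calc |∑ i ∈ Finset.range (p.natDegree + 1), p.coeff i * x^i|
      ≤ ∑ i ∈ Finset.range (p.natDegree + 1), |p.coeff i * x^i| :=
        Finset.abs_sum_le_sum_abs _ _
    _ ≤ ∑ i ∈ Finset.range (p.natDegree + 1), |p.coeff i| * (max 1 x)^p.natDegree := by
        apply Finset.sum_le_sum
        intro i hi
        rw [abs_mul, abs_pow, abs_of_nonneg hx]
        apply mul_le_mul_of_nonneg_left ?_ (abs_nonneg _)
        calc x^i ≤ (max 1 x)^i := pow_le_pow_left₀ hx (le_max_right _ _) i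
          _ ≤ (max 1 x)^p.natDegree :=
              pow_le_pow_right₀ hM (Nat.lt_succ_iff.mp (Finset.mem_range.mp hi))
    _ = (∑ i ∈ Finset.range (p.natDegree + 1), |p.coeff i|) * (max 1 x)^p.natDegree := by
        rw [Finset.sum_mul]

lemma max_one_sq {t : ℝ} (ht : 0 ≤ t) : max 1 (t^2) = (max 1 t)^2 := by
  rcases le_total t 1 with h | h
  · rw [max_eq_left (by nlinarith), max_eq_left h, one_pow]
  · rw [max_eq_right (by nlinarith), max_eq_right h]


/-- derivative identity for the second q-Hankel transform. With
`μ = 1 + q^{2-m}`, `ν ≥ 1/2`, `α, γ > 0` and `f(t) = p(t²) e_{q²}(-αq²t²/μ)`, for `r > 0`: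
`𝓗_{ν-1}[t ∂^q_t f](r) = ((1+q)/μ) r² 𝓗_ν[f](r) - ([2ν]_q/q^{2ν}) 𝓗_{ν-1}[f](q⁻¹r)`. -/
theorem hankel2_derivative_identity (q : ℝ) (hq0 : 0 < q) (hq1 : q < 1)
    (m : ℕ) (hm : 1 ≤ m) (ν : ℝ) (hν : 1 / 2 ≤ ν)
    (α γ : ℝ) (hα : 0 < α) (hγ : 0 < γ) (p : Polynomial ℝ) :
    let μ : ℝ := 1 + q ^ ((2 : ℝ) - (m : ℝ))
    let f : ℝ → ℝ := fun t => p.eval (t ^ 2) * qExpe (q ^ 2) (α * q ^ 2 * t ^ 2 / μ)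
    ∀ r : ℝ, 0 < r →
      hankel2 q μ (ν - 1) γ (fun t => t * qDeriv q f t) r =
        (1 + q) / μ * r ^ 2 * hankel2 q μ ν γ f r -
          qNum q (2 * ν) / q ^ (2 * ν) * hankel2 q μ (ν - 1) γ f (q⁻¹ * r) := by
  intro μ f r hr
  have hμdef : μ = 1 + q ^ ((2:ℝ) - (m:ℝ)) := rfl
  have hfdef : ∀ t : ℝ, f t = p.eval (t^2) * qExpe (q^2) (α * q^2 * t^2 / μ) := fun t => rfl
  have hq2 : (0:ℝ) < q^2 := by positivity
  have hQ1 : q^2 < 1 := sq_lt_one hq0 hq1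
  have hμpos : 0 < μ := by
    rw [hμdef]
    have := Real.rpow_pos_of_pos hq0 ((2:ℝ) - (m:ℝ))
    linarith
  have hνm : -(1/2 : ℝ) ≤ ν - 1 := by linarith
  have hνn : -(1/2 : ℝ) ≤ ν := by linarith
  have hq1ne : q - 1 ≠ 0 := by intro h; nlinarith
  have hint : ∀ k : ℤ, (0:ℝ) < q^k * γ := fun k => by
    have : (0:ℝ) < (q:ℝ)^k := zpow_pos hq0 k
    positivity
  -- bound on f
  obtain ⟨Cp, hCp, hpb⟩ := poly_bound p
  set cf : ℝ := α * q^2 / μ with hcf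
  have hcf0 : 0 < cf := by positivity
  have hfb : ∀ t : ℝ, 0 < t → |f t| ≤ Cp * (max 1 t) ^ (2 * p.natDegree)
      * (qExpE (q^2) (cf * t^2))⁻¹ := by
    intro t ht
    have harg : α * q^2 * t^2 / μ = cf * t^2 := by rw [hcf]; ring
    have hE := qExpE_pos hq2 hQ1 (w := cf * t^2) (by positivity)
    rw [hfdef, harg, qExpe, abs_mul, abs_inv, abs_of_pos hE]
    apply mul_le_mul_of_nonneg_right ?_ (by positivity)
    calc |p.eval (t^2)| ≤ Cp * (max 1 (t^2)) ^ p.natDegree := hpb _ (by positivity)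
      _ = Cp * (max 1 t) ^ (2 * p.natDegree) := by
          rw [max_one_sq ht.le, ← pow_mul, Nat.mul_comm]
  have hfqb : ∀ t : ℝ, 0 < t → |f (q * t)| ≤ Cp * (max 1 t) ^ (2 * p.natDegree)
      * (qExpE (q^2) ((cf * q^2) * t^2))⁻¹ := by
    intro t ht
    have hqt : 0 < q * t := by positivity
    have harg : cf * (q*t)^2 = (cf * q^2) * t^2 := by ring
    have h := hfb (q*t) hqt
    rw [harg] at h
    refine h.trans ?_
    apply mul_le_mul_of_nonneg_right ?_ ?_
    · apply mul_le_mul_of_nonneg_left ?_ hCp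
      apply pow_le_pow_left₀ (by positivity)
      apply max_le (le_max_left _ _)
      calc q * t ≤ 1 * t := by nlinarith
        _ ≤ max 1 t := by rw [one_mul]; exact le_max_right _ _
    · have hE := qExpE_pos hq2 hQ1 (w := (cf * q^2) * t^2) (by positivity)
      positivity
  -- summabilities
  have S1 : Summable (fun k : ℤ => hker q μ (ν-1) r (q^k*γ) * f (q * (q^k*γ)) * q^k) :=
    master_summable hq0 hq1 hμpos hγ hνm hr (by positivity : (0:ℝ) < cf * q^2) hCp
      (fun t => f (q*t)) hfqb
  have S2 : Summable (fun k : ℤ => hker q μ (ν-1) r (q^k*γ) * f (q^k*γ) * q^k) :=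
    master_summable hq0 hq1 hμpos hγ hνm hr hcf0 hCp f hfb
  have S3 : Summable (fun k : ℤ => hker q μ ν r (q^k*γ) * f (q^k*γ) * q^k) :=
    master_summable hq0 hq1 hμpos hγ hνn hr hcf0 hCp f hfb
  have S4 : Summable (fun k : ℤ => hker q μ (ν-1) (q⁻¹*r) (q^k*γ) * f (q^k*γ) * q^k) :=
    master_summable hq0 hq1 hμpos hγ hνm (by positivity) hcf0 hCp f hfb
  -- hankel2 as explicit sums
  have hank : ∀ (ν₀ r₀ : ℝ) (g : ℝ → ℝ), hankel2 q μ ν₀ γ g r₀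
      = (1+q)/μ * ((1-q) * γ * ∑' k : ℤ, hker q μ ν₀ r₀ (q^k*γ) * g (q^k*γ) * q^k) := by
    intro ν₀ r₀ g
    rfl
  rw [hank, hank, hank]
  -- integrand rewriting for the q-derivative
  have hstep1 : ∀ k : ℤ, hker q μ (ν-1) r (q^k*γ) * ((fun t => t * qDeriv q f t) (q^k*γ)) * q^k
      = (q-1)⁻¹ * (hker q μ (ν-1) r (q^k*γ) * f (q * (q^k*γ)) * q^k
          - hker q μ (ν-1) r (q^k*γ) * f (q^k*γ) * q^k) := by
    intro k
    have ht := hint k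
    show hker q μ (ν-1) r (q^k*γ) * ((q^k*γ) * qDeriv q f (q^k*γ)) * q^k = _
    rw [qDeriv]
    field_simp
  have hLHS : (∑' k : ℤ, hker q μ (ν-1) r (q^k*γ) * ((fun t => t * qDeriv q f t) (q^k*γ)) * q^k)
      = (q-1)⁻¹ * ((∑' k : ℤ, hker q μ (ν-1) r (q^k*γ) * f (q * (q^k*γ)) * q^k)
          - ∑' k : ℤ, hker q μ (ν-1) r (q^k*γ) * f (q^k*γ) * q^k) := by
    rw [← Summable.tsum_sub S1 S2, ← tsum_mul_left]
    exact tsum_congr hstep1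
  -- the shift identity
  have hone : (q^(2*ν))⁻¹ * q^(2*(ν-1)+1) * q = 1 := by
    have h1 : q^(2*(ν-1)+1) * q = q^(2*ν) := by
      nth_rewrite 2 [← Real.rpow_one q]
      rw [← Real.rpow_add hq0]
      congr 1
      ring
    rw [mul_assoc, h1]
    exact inv_mul_cancel₀ (Real.rpow_pos_of_pos hq0 _).ne'
  have hshift : (∑' k : ℤ, hker q μ (ν-1) r (q^k*γ) * f (q * (q^k*γ)) * q^k)
      = (q^(2*ν))⁻¹ * ∑' k : ℤ, hker q μ (ν-1) (q⁻¹*r) (q^k*γ) * f (q^k*γ) * q^k := by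
    rw [← tsum_mul_left]
    have heq := (Equiv.addRight (1:ℤ)).tsum_eq
      (f := fun k : ℤ => (q^(2*ν))⁻¹ * (hker q μ (ν-1) (q⁻¹*r) (q^k*γ) * f (q^k*γ) * q^k))
    rw [← heq]
    apply tsum_congr
    intro k
    have ht := hint k
    have hq't : q^((k+1 : ℤ))*γ = q*(q^k*γ) := by
      rw [zpow_add₀ hq0.ne' k 1, zpow_one]
      ring
    show hker q μ (ν-1) r (q^k*γ) * f (q * (q^k*γ)) * q^k
        = (q^(2*ν))⁻¹ * (hker q μ (ν-1) (q⁻¹*r) (q^(k+1)*γ) * f (q^(k+1)*γ) * q^(k+1))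
    rw [hq't, hker_shift hq0 hr ht, zpow_add₀ hq0.ne' k 1, zpow_one]
    linear_combination (-(hker q μ (ν-1) r (q^k*γ) * f (q*(q^k*γ)) * q^k)) * hone
  -- star applied pointwise
  have hstar : ∀ k : ℤ, (q^(2*ν))⁻¹ * (hker q μ (ν-1) (q⁻¹*r) (q^k*γ) * f (q^k*γ) * q^k)
      - hker q μ (ν-1) r (q^k*γ) * f (q^k*γ) * q^k
      = -(1-q) * (((1+q)/μ * r^2) * (hker q μ ν r (q^k*γ) * f (q^k*γ) * q^k)
          - (qNum q (2*ν)/q^(2*ν)) * (hker q μ (ν-1) (q⁻¹*r) (q^k*γ) * f (q^k*γ) * q^k)) := by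
    intro k
    have hs := star hq0 hq1 hμpos hν hr (hint k)
    linear_combination (-(f (q^k*γ) * q^k)) * hs
  have hcomb : (q^(2*ν))⁻¹ * (∑' k : ℤ, hker q μ (ν-1) (q⁻¹*r) (q^k*γ) * f (q^k*γ) * q^k)
      - (∑' k : ℤ, hker q μ (ν-1) r (q^k*γ) * f (q^k*γ) * q^k)
      = -(1-q) * (((1+q)/μ * r^2) * (∑' k : ℤ, hker q μ ν r (q^k*γ) * f (q^k*γ) * q^k)
          - (qNum q (2*ν)/q^(2*ν))
            * (∑' k : ℤ, hker q μ (ν-1) (q⁻¹*r) (q^k*γ) * f (q^k*γ) * q^k)) := by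
    rw [← tsum_mul_left (a := (q^(2*ν))⁻¹), ← Summable.tsum_sub (S4.mul_left _) S2,
      ← tsum_mul_left (a := (1+q)/μ * r^2), ← tsum_mul_left (a := qNum q (2*ν)/q^(2*ν)),
      ← Summable.tsum_sub (S3.mul_left _) (S4.mul_left _), ← tsum_mul_left (a := -(1-q))]
    exact tsum_congr hstar
  rw [hLHS, hshift, hcomb]
  field_simp
  ring
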